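/- The double coset $K_\mathbb{C} c_{\beta_2} B$ is contained in the closure (in $G_\mathbb{C}$) of the double coset $K_\mathbb{C} c_\delta B$. (Remark 3.3, second inclusion: $S_5 \subset S_{10}^{cl}$.) -/

import Mathlib

open Matrix

noncomputable section

/-- 4×4 complex matrices. -/
abbrev M4 : Type := Matrix (Fin 4) (Fin 4) ℂ

/-- The standard symplectic form matrix `J = [[0, -I₂],[I₂, 0]]`. -/
def Jmat : M4 := !![0, 0, -1, 0; 0, 0, 0, -1; 1, 0, 0, 0; 0, 1, 0, 0]

/-- `G_ℂ = Sp(2,ℂ) = {g ∈ GL(4,ℂ) : ᵗg J g = J}`. -/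
def GC : Set M4 := {g | IsUnit g ∧ gᵀ * Jmat * g = Jmat}

/-- `K_ℂ = {diag(g, ᵗg⁻¹) : g ∈ GL(2,ℂ)}`. -/
def KC : Set M4 :=
  {m | ∃ g : Matrix (Fin 2) (Fin 2) ℂ, IsUnit g ∧
    m = !![g 0 0, g 0 1, 0, 0;
           g 1 0, g 1 1, 0, 0;
           0, 0, (gᵀ)⁻¹ 0 0, (gᵀ)⁻¹ 0 1;
           0, 0, (gᵀ)⁻¹ 1 0, (gᵀ)⁻¹ 1 1]}

/-- The Hermitian form of signature (2,2): `(w,z) = w̄₁z₁ + w̄₂z₂ - w̄₃z₃ - w̄₄z₄`. -/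
def hermForm (w z : Fin 4 → ℂ) : ℂ :=
  star (w 0) * z 0 + star (w 1) * z 1 - star (w 2) * z 2 - star (w 3) * z 3

/-- `G_ℝ = G_ℂ ∩ U(2,2)`. -/
def GR : Set M4 :=
  {g | g ∈ GC ∧ ∀ w z : Fin 4 → ℂ, hermForm (g.mulVec w) (g.mulVec z) = hermForm w z}

/-- The standard basis vectors of `ℂ⁴`. -/
def stdVec (i : Fin 4) : Fin 4 → ℂ := Pi.single i 1

/-- `U₊ = ℂe₁ ⊕ ℂe₂`. -/
def Uplus : Submodule ℂ (Fin 4 → ℂ) := Submodule.span ℂ {stdVec 0, stdVec 1}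

/-- `U₋ = ℂe₃ ⊕ ℂe₄`. -/
def Uminus : Submodule ℂ (Fin 4 → ℂ) := Submodule.span ℂ {stdVec 2, stdVec 3}

/-- The line `ℂe₁`. -/
def line1 : Submodule ℂ (Fin 4 → ℂ) := Submodule.span ℂ {stdVec 0}

/-- `Q = {g ∈ G_ℂ : g U₊ = U₊}`. -/
def Qpar : Set M4 := {g | g ∈ GC ∧ Uplus.map g.mulVecLin = Uplus}

/-- `Q̄ = {g ∈ G_ℂ : g U₋ = U₋}`. -/
def Qbar : Set M4 := {g | g ∈ GC ∧ Uminus.map g.mulVecLin = Uminus}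

/-- The Borel subgroup `B = {g ∈ G_ℂ : g ℂe₁ = ℂe₁, g U₊ = U₊}`. -/
def Bor : Set M4 :=
  {g | g ∈ GC ∧ line1.map g.mulVecLin = line1 ∧ Uplus.map g.mulVecLin = Uplus}

/-- `t₁(s) = exp s(E₃₁ - E₁₃)`. -/
def t1 (s : ℝ) : M4 :=
  !![(Real.cos s : ℂ), 0, (-(Real.sin s) : ℂ), 0;
     0, 1, 0, 0;
     ((Real.sin s : ℝ) : ℂ), 0, (Real.cos s : ℂ), 0;
     0, 0, 0, 1]

/-- `t₂(s) = exp s(E₄₂ - E₂₄)`. -/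
def t2 (s : ℝ) : M4 :=
  !![1, 0, 0, 0;
     0, (Real.cos s : ℂ), 0, (-(Real.sin s) : ℂ);
     0, 0, 1, 0;
     0, ((Real.sin s : ℝ) : ℂ), 0, (Real.cos s : ℂ)]

def cb1 : M4 := t1 (Real.pi / 4)
def cb2 : M4 := t2 (Real.pi / 4)
def wb1 : M4 := t1 (Real.pi / 2)
def wb2 : M4 := t2 (Real.pi / 2)

/-- `c_δ = (1/√2) · [[1,0,0,-1],[0,1,-1,0],[0,1,1,0],[1,0,0,1]]`. -/
def cdelta : M4 :=
  ((Real.sqrt 2 : ℂ))⁻¹ • !![1, 0, 0, -1; 0, 1, -1, 0; 0, 1, 1, 0; 1, 0, 0, 1]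

/-- The double coset `A g C = {a g c : a ∈ A, c ∈ C}`. -/
def dc (A : Set M4) (g : M4) (C : Set M4) : Set M4 :=
  {m | ∃ a ∈ A, ∃ c ∈ C, m = a * g * c}

/- ===== auxiliary machinery ===== -/

def rr : ℂ := (Real.sqrt 2 : ℂ)
lemma hr2 : rr^2 = 2 := by
  have h : (Real.sqrt 2)^2 = 2 := Real.sq_sqrt (by norm_num)
  rw [rr]; exact_mod_cast h
lemma hr0 : rr ≠ 0 :=
  Complex.ofReal_ne_zero.mpr (Real.sqrt_ne_zero'.mpr (by norm_num))
lemma hr3 : rr^3 = 2*rr := by rw [pow_succ, hr2]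
lemma hr4 : rr^4 = 4 := by
  have h : rr^4 = (rr^2)^2 := by ring
  rw [h, hr2]; norm_num
lemma hrr : ((Real.sqrt 2 : ℝ) : ℂ) = rr := rfl
lemma hrinv : rr⁻¹ = rr/2 := by
  rw [inv_eq_one_div, div_eq_div_iff hr0 two_ne_zero, one_mul, ← hr2]
  ring

def kmat (e : ℝ) : M4 :=
  !![-1/(2*(e:ℂ)^2), 1, 0, 0;
     0, -2*(e:ℂ), 0, 0;
     0, 0, -2*(e:ℂ)^2, 0;
     0, 0, -(e:ℂ), -1/(2*(e:ℂ))]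
def umat (e : ℝ) : M4 :=
  !![1, 0, 0, 0;
     0, 1, 0, 0;
     0, (e:ℂ), 1, 0;
     (e:ℂ), 0, 0, 1]
def bmat (e : ℝ) : M4 :=
  !![-2*rr*(e:ℂ)^2, -(e:ℂ), rr/2, -(e:ℂ);
     0, -1/(2*(e:ℂ)), -rr/(4*(e:ℂ)^2), 1/(2*(e:ℂ));
     0, 0, -rr/(4*(e:ℂ)^2), 0;
     0, 0, rr/2, -2*(e:ℂ)]

set_option maxHeartbeats 1000000 in
lemma key (e : ℝ) (he : (e:ℂ) ≠ 0) : kmat e * cdelta * bmat e = umat e * cb2 := by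
  have h2 := hr2
  rw [cdelta, ← rr, hrinv]
  ext i j
  fin_cases i <;> fin_cases j <;>
    · simp [kmat, bmat, umat, cb2, t2, Matrix.mul_apply, Fin.sum_univ_four,
        Real.cos_pi_div_four, Real.sin_pi_div_four, hrr, Matrix.vecHead, Matrix.vecTail]
      try field_simp [he]
      try ring_nf
      try simp only [hr2, hr3, hr4]
      try norm_num
      try ring_nf
      try linear_combination h2
      try field_simp [he]

lemma isUnit_of_symplectic {g : M4} (h : gᵀ * Jmat * g = Jmat) : IsUnit g := by
  have hJ : (-Jmat) * Jmat = 1 := by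
    ext i j
    fin_cases i <;> fin_cases j <;>
      simp [Jmat, Matrix.mul_apply, Fin.sum_univ_four, Matrix.one_apply, Matrix.neg_apply,
        Matrix.vecHead, Matrix.vecTail]
  have hleft : ((-Jmat) * (gᵀ * Jmat)) * g = 1 := by
    rw [Matrix.mul_assoc, Matrix.mul_assoc, ← Matrix.mul_assoc gᵀ, h, hJ]
  rw [mul_eq_one_comm] at hleft
  exact (Matrix.isUnit_iff_isUnit_det g).mpr (Matrix.isUnit_det_of_right_inverse hleft)

set_option maxHeartbeats 1000000 in
lemma bmat_symp (e : ℝ) (he : (e:ℂ) ≠ 0) : (bmat e)ᵀ * Jmat * bmat e = Jmat := by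
  have h2 := hr2
  ext i j
  fin_cases i <;> fin_cases j <;>
    · simp [bmat, Jmat, Matrix.mul_apply, Fin.sum_univ_four, Matrix.transpose_apply,
        Matrix.vecHead, Matrix.vecTail]
      try field_simp [he]
      try ring_nf
      try simp only [hr2, hr3, hr4]
      try norm_num
      try ring_nf
      try linear_combination h2
      try field_simp [he]

lemma span_pair_smul (α β γ : ℂ) (hα : α ≠ 0) (hγ : γ ≠ 0) (x y : Fin 4 → ℂ) :
    Submodule.span ℂ {α • x, β • x + γ • y} = Submodule.span ℂ {x, y} := by
  have hx : x ∈ ({x, y} : Set (Fin 4 → ℂ)) := Set.mem_insert _ _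
  have hy : y ∈ ({x, y} : Set (Fin 4 → ℂ)) := Set.mem_insert_iff.mpr (Or.inr rfl)
  have hv1 : α • x ∈ ({α • x, β • x + γ • y} : Set (Fin 4 → ℂ)) := Set.mem_insert _ _
  have hv2 : β • x + γ • y ∈ ({α • x, β • x + γ • y} : Set (Fin 4 → ℂ)) :=
    Set.mem_insert_iff.mpr (Or.inr rfl)
  apply le_antisymm
  · rw [Submodule.span_le]
    rintro v hv
    simp only [Set.mem_insert_iff, Set.mem_singleton_iff] at hv
    rcases hv with rfl | rfl
    · exact Submodule.smul_mem _ _ (Submodule.subset_span hx)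
    · exact Submodule.add_mem _ (Submodule.smul_mem _ _ (Submodule.subset_span hx))
        (Submodule.smul_mem _ _ (Submodule.subset_span hy))
  · rw [Submodule.span_le]
    rintro v hv
    simp only [Set.mem_insert_iff, Set.mem_singleton_iff] at hv
    rcases hv with h | h
    · have hxx : v = α⁻¹ • (α • x) := by
        rw [h, smul_smul, inv_mul_cancel₀ hα, one_smul]
      rw [hxx]
      exact Submodule.smul_mem _ _ (Submodule.subset_span hv1)
    · have hyy : v = γ⁻¹ • (β • x + γ • y) - (γ⁻¹ * β * α⁻¹) • (α • x) := by
        rw [h]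
        match_scalars <;> · field_simp; try ring
      rw [hyy]
      exact Submodule.sub_mem _
        (Submodule.smul_mem _ _ (Submodule.subset_span hv2))
        (Submodule.smul_mem _ _ (Submodule.subset_span hv1))

lemma bmat_col0 (e : ℝ) : (bmat e).mulVecLin (stdVec 0) = (-2*rr*(e:ℂ)^2) • stdVec 0 := by
  funext i
  fin_cases i <;>
    simp [bmat, stdVec, Matrix.mulVecLin, Matrix.mulVec_single, Matrix.transpose_apply,
      Matrix.vecHead, Matrix.vecTail, Pi.single_apply]

lemma bmat_col1 (e : ℝ) :
    (bmat e).mulVecLin (stdVec 1) = (-(e:ℂ)) • stdVec 0 + (-1/(2*(e:ℂ))) • stdVec 1 := by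
  funext i
  fin_cases i <;>
    simp [bmat, stdVec, Matrix.mulVecLin, Matrix.mulVec_single, Matrix.transpose_apply,
      Matrix.vecHead, Matrix.vecTail, Pi.single_apply]

lemma bmat_Bor (e : ℝ) (he : (e:ℂ) ≠ 0) : bmat e ∈ Bor := by
  have hα : (-2*rr*(e:ℂ)^2) ≠ 0 := by
    simp [hr0, he]
  have hγ : (-1/(2*(e:ℂ))) ≠ 0 := by
    simp [he]
  refine ⟨⟨isUnit_of_symplectic (bmat_symp e he), bmat_symp e he⟩, ?_, ?_⟩
  · rw [line1, Submodule.map_span, Set.image_singleton, bmat_col0]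
    exact Submodule.span_singleton_smul_eq (isUnit_iff_ne_zero.mpr hα) _
  · rw [Uplus, Submodule.map_span, Set.image_insert_eq, Set.image_singleton,
      bmat_col0, bmat_col1]
    exact span_pair_smul _ _ _ hα hγ _ _

lemma kmat_KC (e : ℝ) (he : (e:ℂ) ≠ 0) : kmat e ∈ KC := by
  refine ⟨!![-1/(2*(e:ℂ)^2), 1; 0, -2*(e:ℂ)], ?_, ?_⟩
  · rw [Matrix.isUnit_iff_isUnit_det, Matrix.det_fin_two_of, isUnit_iff_ne_zero]
    field_simp
    simp [he]
  · have hinv : (!![-1/(2*(e:ℂ)^2), 1; 0, -2*(e:ℂ)]ᵀ)⁻¹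
        = !![-2*(e:ℂ)^2, 0; -(e:ℂ), -1/(2*(e:ℂ))] := by
      apply Matrix.inv_eq_right_inv
      ext i j
      fin_cases i <;> fin_cases j <;>
        · simp [Matrix.mul_apply, Fin.sum_univ_two, Matrix.one_apply, Matrix.transpose_apply,
            Matrix.vecHead, Matrix.vecTail]
          try field_simp
          try ring
    rw [hinv]
    ext i j
    fin_cases i <;> fin_cases j <;> simp [kmat, Matrix.vecHead, Matrix.vecTail]

lemma KC_mul {a b : M4} (ha : a ∈ KC) (hb : b ∈ KC) : a * b ∈ KC := by
  obtain ⟨g1, hg1, rfl⟩ := ha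
  obtain ⟨g2, hg2, rfl⟩ := hb
  refine ⟨g1 * g2, hg1.mul hg2, ?_⟩
  have hrev : ((g1 * g2)ᵀ)⁻¹ = (g1ᵀ)⁻¹ * (g2ᵀ)⁻¹ := by
    rw [Matrix.transpose_mul, Matrix.mul_inv_rev]
  rw [hrev]
  ext i j
  fin_cases i <;> fin_cases j <;>
    simp [Matrix.mul_apply, Fin.sum_univ_four, Fin.sum_univ_two, Matrix.transpose_apply,
      Matrix.vecHead, Matrix.vecTail]

lemma GC_mul {a b : M4} (ha : a ∈ GC) (hb : b ∈ GC) : a * b ∈ GC := by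
  refine ⟨ha.1.mul hb.1, ?_⟩
  have h1 : (a*b)ᵀ * Jmat * (a*b) = bᵀ * (aᵀ * Jmat * a) * b := by
    rw [Matrix.transpose_mul]
    noncomm_ring
  rw [h1, ha.2, hb.2]

lemma Bor_mul {a b : M4} (ha : a ∈ Bor) (hb : b ∈ Bor) : a * b ∈ Bor := by
  refine ⟨GC_mul ha.1 hb.1, ?_, ?_⟩
  · rw [Matrix.mulVecLin_mul, Submodule.map_comp, hb.2.1, ha.2.1]
  · rw [Matrix.mulVecLin_mul, Submodule.map_comp, hb.2.2, ha.2.2]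

def nmat : M4 := !![0,0,0,0; 0,0,0,0; 0,1,0,0; 1,0,0,0]

lemma umat_eq (e : ℝ) : umat e = 1 + (e:ℂ) • nmat := by
  ext i j
  fin_cases i <;> fin_cases j <;>
    simp [umat, nmat, Matrix.one_apply, Matrix.add_apply, Matrix.smul_apply,
      Matrix.vecHead, Matrix.vecTail]

lemma umat_cont : Continuous umat := by
  have h : umat = fun e : ℝ => 1 + ((e:ℂ)) • nmat := funext umat_eq
  rw [h]
  exact continuous_const.add (Complex.continuous_ofReal.smul continuous_const)

lemma umat_zero : umat 0 = 1 := by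
  ext i j
  fin_cases i <;> fin_cases j <;> simp [umat, Matrix.one_apply, Matrix.vecHead, Matrix.vecTail]


/-- Remark 3.3, second inclusion: `K_ℂ c_{β₂} B ⊆ cl(K_ℂ c_δ B)`,
i.e. `S₅ ⊆ S₁₀^cl`. -/
theorem stmt_6 : dc KC cb2 Bor ⊆ closure (dc KC cdelta Bor) := by
  rintro x ⟨a, ha, c, hc, rfl⟩
  have hcont : Continuous (fun e : ℝ => a * (umat e * cb2) * c) :=
    (continuous_const.matrix_mul (umat_cont.matrix_mul continuous_const)).matrix_mul
      continuous_const
  have hval : a * (umat 0 * cb2) * c = a * cb2 * c := by rw [umat_zero, one_mul]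
  have htend : Filter.Tendsto (fun e : ℝ => a * (umat e * cb2) * c)
      (nhdsWithin 0 {(0:ℝ)}ᶜ) (nhds (a * cb2 * c)) := by
    rw [← hval]
    exact (hcont.tendsto 0).mono_left nhdsWithin_le_nhds
  refine mem_closure_of_tendsto htend ?_
  filter_upwards [self_mem_nhdsWithin] with e he
  have hce : (e:ℂ) ≠ 0 := Complex.ofReal_ne_zero.mpr he
  refine ⟨a * kmat e, KC_mul ha (kmat_KC e hce), bmat e * c, Bor_mul (bmat_Bor e hce) hc, ?_⟩
  rw [← key e hce]
  noncomm_ring
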